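/- Let k be a field, L = k((t)) the field of formal Laurent series, O = k⟦t⟧, and h ≥ 1. Let Λ ⊆ L^h be an O-lattice, i.e., an O-submodule with t^N·O^h ⊆ Λ ⊆ t^{−N}·O^h for some N ≥ 0. Suppose there is an integer l such that the set of start indices of the nonzero elements of Λ is exactly {i ∈ ℤ : i ≥ l}. Then Λ is the O-submodule of L^h generated by {e_i : i ∈ ℤ, i ≥ l} (equivalently, the free O-module on e_l, e_{l+1}, …, e_{l+h−1}). -/

import Mathlib

/-- The uniformizer `t` of `L = k((t))`, realized as the Laurent series `t`. -/
noncomputable def tVar (k : Type*) [Field k] : LaurentSeries k :=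
  HahnSeries.single (1 : ℤ) (1 : k)

/-- For `i = q·h + r` with `0 ≤ r < h`, the coefficient `a_i` in the expansion
`v = Σ_i a_i e_i`, i.e. the coefficient of `t^q` in the `r`-th component of `v`. -/
noncomputable def coeffAt {k : Type*} [Field k] (h : ℕ) (v : Fin h → LaurentSeries k)
    (i : ℤ) : k :=
  if hr : (i % (h : ℤ)).toNat < h then (v ⟨(i % (h : ℤ)).toNat, hr⟩).coeff (i / (h : ℤ))
  else 0

/-- `i` is the start index of `v`: the minimal index with nonzero coefficient in the
expansion `v = Σ_i a_i e_i`. -/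
def IsStartIndex {k : Type*} [Field k] (h : ℕ) (v : Fin h → LaurentSeries k) (i : ℤ) : Prop :=
  coeffAt h v i ≠ 0 ∧ ∀ j : ℤ, j < i → coeffAt h v j = 0

/-- The vector `e_i := t^q · ε_r` for `i = q·h + r` with `0 ≤ r < h`,
where `ε_0, …, ε_{h-1}` is the standard basis of `L^h`. -/
noncomputable def eVec (k : Type*) [Field k] (h : ℕ) (i : ℤ) : Fin h → LaurentSeries k :=
  fun r => if hr : (i % (h : ℤ)).toNat < h then
    (if r = ⟨(i % (h : ℤ)).toNat, hr⟩ then (tVar k) ^ (i / (h : ℤ)) else 0)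
  else 0

section Aux

variable {k : Type*} [Field k] {h : ℕ}

lemma tVar_pow (n : ℕ) : (tVar k) ^ n = HahnSeries.single (n : ℤ) (1 : k) := by
  rw [tVar, HahnSeries.single_pow]
  simp

lemma tVar_zpow (q : ℤ) : (tVar k) ^ q = HahnSeries.single q (1 : k) := by
  rcases le_or_gt 0 q with hq | hq
  · lift q to ℕ using hq
    rw [zpow_natCast, tVar_pow]
  · have h1 : HahnSeries.single q (1 : k) * HahnSeries.single (-q) (1 : k) = 1 := by
      rw [HahnSeries.single_mul_single, add_neg_cancel, mul_one, HahnSeries.single_zero_one]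
    have h2 : (tVar k) ^ q * (tVar k) ^ (-q) = 1 := by
      rw [← zpow_add₀ (by simp [tVar, HahnSeries.single_ne_zero] : tVar k ≠ 0)]
      simp
    have hmq : (tVar k) ^ (-q) = HahnSeries.single (-q) (1 : k) := by
      lift (-q) to ℕ using (by omega) with n hn
      rw [zpow_natCast, tVar_pow, hn]
    rw [hmq] at h2
    have hne : (HahnSeries.single (-q) (1 : k)) ≠ 0 := HahnSeries.single_ne_zero one_ne_zero
    exact mul_right_cancel₀ hne (h2.trans h1.symm)

lemma single_one_mul_coeff (a : ℤ) (x : LaurentSeries k) (n : ℤ) :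
    (HahnSeries.single a (1 : k) * x).coeff n = x.coeff (n - a) := by
  have := HahnSeries.coeff_single_mul_add (r := (1 : k)) (x := x) (b := a) (a := n - a)
  rw [one_mul, sub_add_cancel] at this
  exact this

lemma emod_toNat_lt (hh : 1 ≤ h) (j : ℤ) : (j % (h : ℤ)).toNat < h := by
  have h0 : (0:ℤ) < (h:ℤ) := by exact_mod_cast hh
  have := Int.emod_lt_of_pos j h0
  have := Int.emod_nonneg j (by omega : (h:ℤ) ≠ 0)
  omega

lemma coeffAt_def' (hh : 1 ≤ h) (v : Fin h → LaurentSeries k) (j : ℤ) :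
    coeffAt h v j = (v ⟨(j % (h : ℤ)).toNat, emod_toNat_lt hh j⟩).coeff (j / (h : ℤ)) := by
  rw [coeffAt, dif_pos (emod_toNat_lt hh j)]

lemma coeffAt_add (hh : 1 ≤ h) (v w : Fin h → LaurentSeries k) (j : ℤ) :
    coeffAt h (v + w) j = coeffAt h v j + coeffAt h w j := by
  simp [coeffAt_def' hh]

lemma coeffAt_sub (hh : 1 ≤ h) (v w : Fin h → LaurentSeries k) (j : ℤ) :
    coeffAt h (v - w) j = coeffAt h v j - coeffAt h w j := by
  simp [coeffAt_def' hh]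

lemma smul_apply_eq (f : PowerSeries k) (v : Fin h → LaurentSeries k) (s : Fin h) :
    (f • v) s = (f : LaurentSeries k) * v s := by
  rw [Pi.smul_apply, Algebra.smul_def]
  rfl

lemma coeffAt_C_smul (hh : 1 ≤ h) (c : k) (v : Fin h → LaurentSeries k) (j : ℤ) :
    coeffAt h ((PowerSeries.C c) • v) j = c * coeffAt h v j := by
  simp only [coeffAt_def' hh, smul_apply_eq, PowerSeries.coe_C,
    HahnSeries.C_apply, HahnSeries.coeff_single_zero_mul]

lemma div_emod_inj (hh : 1 ≤ h) {i j : ℤ} (h1 : j % (h:ℤ) = i % (h:ℤ))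
    (h2 : j / (h:ℤ) = i / (h:ℤ)) : j = i := by
  have hj := Int.mul_ediv_add_emod j (h:ℤ)
  have hi := Int.mul_ediv_add_emod i (h:ℤ)
  rw [h1, h2] at hj
  omega

lemma coeffAt_eVec (hh : 1 ≤ h) (i j : ℤ) :
    coeffAt h (eVec k h i) j = if j = i then 1 else 0 := by
  rw [coeffAt_def' hh, eVec, dif_pos (emod_toNat_lt hh i)]
  by_cases hmod : j % (h:ℤ) = i % (h:ℤ)
  · rw [if_pos (by simp [Fin.ext_iff, hmod]), tVar_zpow, HahnSeries.coeff_single]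
    by_cases hdiv : j / (h:ℤ) = i / (h:ℤ)
    · rw [if_pos hdiv, if_pos (div_emod_inj hh hmod hdiv)]
    · rw [if_neg hdiv, if_neg (fun hji => hdiv (by rw [hji]))]
  · have hnj := Int.emod_nonneg j (by omega : (h:ℤ) ≠ 0)
    have hni := Int.emod_nonneg i (by omega : (h:ℤ) ≠ 0)
    rw [if_neg (by simp only [Fin.ext_iff]; omega), if_neg (fun hji => hmod (by rw [hji]))]
    simp

lemma coeffAt_sum (hh : 1 ≤ h) {α : Type*} [DecidableEq α] (S : Finset α)
    (f : α → (Fin h → LaurentSeries k)) (j : ℤ) :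
    coeffAt h (∑ a ∈ S, f a) j = ∑ a ∈ S, coeffAt h (f a) j := by
  induction S using Finset.induction with
  | empty => simp [coeffAt_def' hh]
  | insert _ _ hx ih => rw [Finset.sum_insert hx, Finset.sum_insert hx, coeffAt_add hh, ih]

lemma coeffAt_mul_add (hh : 1 ≤ h) (v : Fin h → LaurentSeries k) (q : ℤ) (s : Fin h) :
    coeffAt h v (q * (h:ℤ) + (s:ℤ)) = (v s).coeff q := by
  have hs0 : (0:ℤ) ≤ (s:ℤ) := by positivity
  have hsh : ((s:ℕ):ℤ) < (h:ℤ) := by exact_mod_cast s.isLt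
  have hrw : q * (h:ℤ) + (s:ℤ) = (s:ℤ) + (h:ℤ) * q := by ring
  have h1 : ((q * (h:ℤ) + (s:ℤ)) % (h:ℤ)).toNat = (s : ℕ) := by
    rw [hrw, Int.add_mul_emod_self_left, Int.emod_eq_of_lt hs0 hsh]
    simp
  have h2 : (q * (h:ℤ) + (s:ℤ)) / (h:ℤ) = q := by
    rw [hrw, Int.add_mul_ediv_left _ _ (by omega : (h:ℤ) ≠ 0),
      Int.ediv_eq_zero_of_lt hs0 hsh, zero_add]
  rw [coeffAt_def' hh, h2]
  congr 1
  exact congrArg v (Fin.ext h1)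

lemma shift_eq (x : LaurentSeries k) (q₀ : ℤ) (hx : ∀ q, q < q₀ → x.coeff q = 0) :
    HahnSeries.single q₀ (1:k) *
      ((PowerSeries.mk fun m => x.coeff (q₀ + m) : PowerSeries k) : LaurentSeries k) = x := by
  ext n
  rw [single_one_mul_coeff, PowerSeries.coeff_coe]
  split_ifs with hn
  · exact (hx n (by omega)).symm
  · rw [PowerSeries.coeff_mk]
    congr 1
    omega

lemma eVec_apply (hh : 1 ≤ h) (i : ℤ) (s : Fin h) :
    eVec k h i s = if (s : ℤ) = i % (h:ℤ) then HahnSeries.single (i / (h:ℤ)) (1:k) else 0 := by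
  have hni := Int.emod_nonneg i (by omega : (h:ℤ) ≠ 0)
  rw [eVec, dif_pos (emod_toNat_lt hh i), tVar_zpow]
  by_cases hs : (s : ℤ) = i % (h:ℤ)
  · rw [if_pos (Fin.ext (by simp only [Fin.val_mk]; omega)), if_pos hs]
  · rw [if_neg (by simp only [Fin.ext_iff]; omega), if_neg hs]

lemma exists_start_index (hh : 1 ≤ h) (v : Fin h → LaurentSeries k) (hv : v ≠ 0)
    (B : ℤ) (hB : ∀ j : ℤ, j < B → coeffAt h v j = 0) :
    ∃ i : ℤ, IsStartIndex h v i := by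
  have hne : ∃ j : ℤ, coeffAt h v j ≠ 0 := by
    obtain ⟨s, hs⟩ := Function.ne_iff.mp hv
    obtain ⟨q, hq⟩ : ∃ q, (v s).coeff q ≠ 0 := by
      by_contra hq
      push_neg at hq
      exact hs (HahnSeries.ext (funext hq))
    exact ⟨q * (h:ℤ) + (s:ℤ), by rwa [coeffAt_mul_add hh]⟩
  have hbdd : ∃ b : ℤ, ∀ z : ℤ, coeffAt h v z ≠ 0 → b ≤ z := by
    refine ⟨B, fun z hz => ?_⟩
    by_contra hc
    exact hz (hB z (by omega))
  obtain ⟨lb, hlb, hmin⟩ := Int.exists_least_of_bdd hbdd hne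
  refine ⟨lb, hlb, fun j hj => ?_⟩
  by_contra hc
  exact absurd (hmin j hc) (by omega)

end Aux

/-- A lattice whose weak EL chart is `{i : ℤ | i ≥ l}` is the `O`-module generated by the
`e_i` with `i ≥ l`. -/
theorem lattice_of_weak_EL_chart_interval
    (k : Type*) [Field k] (h : ℕ) (hh : 1 ≤ h)
    (Λ : Submodule (PowerSeries k) (Fin h → LaurentSeries k))
    -- `Λ` is a lattice: `t^N · O^h ⊆ Λ ⊆ t^(−N) · O^h` for some `N ≥ 0`
    (hlat : ∃ N : ℕ,
      (∀ f : Fin h → PowerSeries k,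
        (fun r => (tVar k) ^ (N : ℤ) * ((f r : PowerSeries k) : LaurentSeries k)) ∈ Λ) ∧
      (∀ v ∈ Λ, ∀ r : Fin h, ∃ f : PowerSeries k,
        v r = (tVar k) ^ (-(N : ℤ)) * ((f : PowerSeries k) : LaurentSeries k)))
    (l : ℤ)
    -- the weak EL chart of `Λ` is exactly `{i : ℤ | i ≥ l}`
    (hchart : {i : ℤ | ∃ v : Fin h → LaurentSeries k, v ∈ Λ ∧ v ≠ 0 ∧ IsStartIndex h v i}
        = {i : ℤ | l ≤ i}) :
    Λ = Submodule.span (PowerSeries k)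
        {w : Fin h → LaurentSeries k | ∃ i : ℤ, l ≤ i ∧ w = eVec k h i} := by
  classical
  obtain ⟨N, hlat1, hlat2⟩ := hlat
  have hchart' := Set.ext_iff.mp hchart
  have hZ : ((h:ℤ)) ≠ 0 := by
    have : (0:ℤ) < (h:ℤ) := by exact_mod_cast hh
    omega
  -- any vector whose coefficients vanish below N*h lies in Λ
  have key : ∀ v : Fin h → LaurentSeries k,
      (∀ j : ℤ, j < (N:ℤ) * h → coeffAt h v j = 0) → v ∈ Λ := by
    intro v hv
    have hcomp : ∀ r : Fin h, ∀ q : ℤ, q < (N:ℤ) → (v r).coeff q = 0 := by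
      intro r q hq
      rw [← coeffAt_mul_add hh]
      apply hv
      have hr : ((r:ℕ):ℤ) < (h:ℤ) := by exact_mod_cast r.isLt
      have h1 : (q + 1) * (h:ℤ) ≤ (N:ℤ) * (h:ℤ) :=
        mul_le_mul_of_nonneg_right (by omega) (by positivity)
      nlinarith
    have hveq : v = fun r => (tVar k) ^ ((N:ℕ) : ℤ) *
        (((PowerSeries.mk fun m => (v r).coeff ((N:ℤ) + m)) : PowerSeries k) : LaurentSeries k) := by
      funext r
      rw [tVar_zpow]
      exact (shift_eq (v r) (N:ℤ) (hcomp r)).symm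
    rw [hveq]
    exact hlat1 _
  -- all basis vectors eVec i with i ≥ l are in Λ
  have eMem : ∀ i : ℤ, l ≤ i → eVec k h i ∈ Λ := by
    have main : ∀ m : ℕ, ∀ i : ℤ, l ≤ i → (N:ℤ) * h - i ≤ (m:ℤ) → eVec k h i ∈ Λ := by
      intro m
      induction m with
      | zero =>
        intro i hi hm
        apply key
        intro j hj
        rw [coeffAt_eVec hh, if_neg (by omega)]
      | succ m ih =>
        intro i hi hm
        rcases le_or_gt ((N:ℤ) * h) i with hbig | hsmall
        · apply key
          intro j hj
          rw [coeffAt_eVec hh, if_neg (by omega)]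
        · obtain ⟨v, hvΛ, hv0, hvs⟩ := (hchart' i).mpr hi
          set c := coeffAt h v i with hc
          have hcne : c ≠ 0 := hvs.1
          set w : Fin h → LaurentSeries k := (PowerSeries.C c⁻¹) • v with hw
          have hwΛ : w ∈ Λ := Λ.smul_mem _ hvΛ
          have hwc : ∀ j : ℤ, coeffAt h w j = c⁻¹ * coeffAt h v j := by
            intro j; rw [hw, coeffAt_C_smul hh]
          have hwi : coeffAt h w i = 1 := by
            rw [hwc, ← hc, inv_mul_cancel₀ hcne]
          have hwlt : ∀ j : ℤ, j < i → coeffAt h w j = 0 := by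
            intro j hj; rw [hwc, hvs.2 j hj, mul_zero]
          set T : Finset ℤ := Finset.Ioo i ((N:ℤ) * h) with hT
          set u : Fin h → LaurentSeries k :=
            w - eVec k h i - ∑ j ∈ T, (PowerSeries.C (coeffAt h w j)) • eVec k h j with hu
          have huΛ : u ∈ Λ := by
            apply key
            intro j hj
            rw [hu, coeffAt_sub hh, coeffAt_sub hh, coeffAt_sum hh, coeffAt_eVec hh]
            have hsum : ∀ j' ∈ T, coeffAt h ((PowerSeries.C (coeffAt h w j')) • eVec k h j') j
                = if j = j' then coeffAt h w j' else 0 := by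
              intro j' _
              rw [coeffAt_C_smul hh, coeffAt_eVec hh]
              split_ifs <;> simp
            rw [Finset.sum_congr rfl hsum, Finset.sum_ite_eq T j (fun j' => coeffAt h w j')]
            by_cases hji : j = i
            · subst hji
              rw [if_pos rfl, if_neg (by simp [hT]), hwi]
              ring
            · rw [if_neg hji]
              rcases lt_or_gt_of_ne hji with hlt | hgt
              · rw [hwlt j hlt, if_neg (by simp [hT]; omega)]
                ring
              · rw [if_pos (by simp [hT]; omega)]
                ring
          have hsumΛ : (∑ j ∈ T, (PowerSeries.C (coeffAt h w j)) • eVec k h j) ∈ Λ := by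
            apply Submodule.sum_mem
            intro j hj
            have hj' : i < j ∧ j < (N:ℤ)*h := by simpa [hT] using hj
            exact Λ.smul_mem _ (ih j (by omega) (by omega))
          have : eVec k h i = w - (∑ j ∈ T, (PowerSeries.C (coeffAt h w j)) • eVec k h j) - u := by
            rw [hu]; abel
          rw [this]
          exact Submodule.sub_mem _ (Submodule.sub_mem _ hwΛ hsumΛ) huΛ
    intro i hi
    exact main ((N:ℤ) * h - i).toNat i hi (by omega)
  -- now prove the equality
  apply le_antisymm
  · -- Λ ≤ span
    intro v hvΛ
    by_cases hv0 : v = 0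
    · simp [hv0]
    -- coefficients of v vanish below l
    have hlow : ∀ j : ℤ, j < l → coeffAt h v j = 0 := by
      have hbdd : ∀ j : ℤ, j < -((N:ℤ) * h) → coeffAt h v j = 0 := by
        intro j hj
        have hq : j / (h:ℤ) < -(N:ℤ) := by
          by_contra hcon
          push_neg at hcon
          have := Int.mul_ediv_add_emod j (h:ℤ)
          have hmn := Int.emod_nonneg j hZ
          have h1 : (h:ℤ) * (-(N:ℤ)) ≤ (h:ℤ) * (j / (h:ℤ)) :=
            mul_le_mul_of_nonneg_left hcon (by positivity)
          nlinarith
        rw [coeffAt_def' hh]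
        obtain ⟨f, hf⟩ := hlat2 v hvΛ ⟨(j % (h:ℤ)).toNat, emod_toNat_lt hh j⟩
        rw [hf, tVar_zpow, single_one_mul_coeff, PowerSeries.coeff_coe,
          if_pos (by omega)]
      obtain ⟨i₀, hi₀⟩ := exists_start_index hh v hv0 _ hbdd
      have : l ≤ i₀ := (hchart' i₀).mp ⟨v, hvΛ, hv0, hi₀⟩
      intro j hj
      exact hi₀.2 j (by omega)
    -- decompose v as a combination of eVec (l + ((s - l) % h))
    have hdecomp : v = ∑ s : Fin h,
        ((PowerSeries.mk fun m =>
          (v s).coeff ((l + (((s:ℤ) - l) % h)) / (h:ℤ) + m)) : PowerSeries k) •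
          eVec k h (l + (((s:ℤ) - l) % h)) := by
      funext s'
      rw [Finset.sum_apply]
      have hmodfact : ∀ s : Fin h, (l + (((s:ℤ) - l) % h)) % (h:ℤ) = (s:ℤ) := by
        intro s
        have hs0 : (0:ℤ) ≤ (s:ℤ) := by positivity
        have hsh : ((s:ℕ):ℤ) < (h:ℤ) := by exact_mod_cast s.isLt
        conv_lhs => rw [Int.add_emod, Int.emod_emod_of_dvd _ dvd_rfl, ← Int.add_emod]
        have : l + ((s:ℤ) - l) = (s:ℤ) := by ring
        rw [this, Int.emod_eq_of_lt hs0 hsh]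
      have hterm : ∀ s ∈ (Finset.univ : Finset (Fin h)), s ≠ s' →
          (((PowerSeries.mk fun m =>
            (v s).coeff ((l + (((s:ℤ) - l) % h)) / (h:ℤ) + m)) : PowerSeries k) •
            eVec k h (l + (((s:ℤ) - l) % h))) s' = 0 := by
        intro s _ hss
        rw [smul_apply_eq, eVec_apply hh, hmodfact s, if_neg (by
          simp only [Ne, ← Fin.val_eq_val] at hss ⊢
          omega), mul_zero]
      rw [Finset.sum_eq_single_of_mem s' (Finset.mem_univ s') hterm]
      rw [smul_apply_eq, eVec_apply hh, hmodfact s', if_pos rfl, mul_comm]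
      set q₀ := (l + (((s':ℤ) - l) % h)) / (h:ℤ) with hq₀
      refine (shift_eq (v s') q₀ fun q hq => ?_).symm
      rw [← coeffAt_mul_add hh]
      apply hlow
      -- q * h + s' < l
      have hdm := Int.mul_ediv_add_emod (l + (((s':ℤ) - l) % h)) (h:ℤ)
      rw [hmodfact s'] at hdm
      have hmlt := Int.emod_lt_of_pos ((s':ℤ) - l) (by omega : (0:ℤ) < (h:ℤ))
      have hmge := Int.emod_nonneg ((s':ℤ) - l) hZ
      have h1 : (h:ℤ) * (q + 1) ≤ (h:ℤ) * q₀ :=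
        mul_le_mul_of_nonneg_left (by omega) (by positivity)
      nlinarith
    rw [hdecomp]
    apply Submodule.sum_mem
    intro s _
    apply Submodule.smul_mem
    apply Submodule.subset_span
    refine ⟨l + (((s:ℤ) - l) % h), ?_, rfl⟩
    have := Int.emod_nonneg ((s:ℤ) - l) hZ
    omega
  · -- span ≤ Λ
    rw [Submodule.span_le]
    rintro w ⟨i, hi, rfl⟩
    exact eMem i hi
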